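/- Let f : ℝ^d → ℝ be L-smooth, φ proper closed convex, P = f + φ, γ ∈ (0,1], η > 0, y = prox_{ηφ}(w + ηd), and w⁺ = (1-γ)w + γy. Then P(w⁺) ≤ P(w) + (γ/2)‖∇f(w) + d‖² + (γ/2 - γ/η + Lγ²/2)‖y - w‖² - (γ/2)‖∇f(w) + d - (y - w)‖². -/

import Mathlib

open scoped RealInnerProductSpace

lemma inner_half' {dim : ℕ} (a b : EuclideanSpace ℝ (Fin dim)) :
    ⟪a, b⟫ = (‖a‖^2 + ‖b‖^2 - ‖a - b‖^2) / 2 := by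
  simp only [← real_inner_self_eq_norm_sq, inner_sub_sub_self, real_inner_comm b a]
  ring

lemma combo_sq' {dim : ℕ} (a b : EuclideanSpace ℝ (Fin dim)) (t : ℝ) :
    ‖(1-t)•a + t•b‖^2 = (1-t)*‖a‖^2 + t*‖b‖^2 - t*(1-t)*‖a-b‖^2 := by
  simp only [← real_inner_self_eq_norm_sq, inner_add_add_self, inner_sub_sub_self,
    real_inner_smul_left, real_inner_smul_right, real_inner_comm b a]
  ring

set_option maxHeartbeats 1000000
theorem one_step_descent {dim : ℕ}
    (f φ : EuclideanSpace ℝ (Fin dim) → ℝ)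
    (gradf : EuclideanSpace ℝ (Fin dim) → EuclideanSpace ℝ (Fin dim))
    (L : ℝ) (hL : 0 < L)
    (hsmooth : ∀ u v : EuclideanSpace ℝ (Fin dim),
      f v ≤ f u + ⟪gradf u, v - u⟫ + (L / 2) * ‖v - u‖ ^ 2)
    (hφ : ConvexOn ℝ Set.univ φ)
    (η γ : ℝ) (hη : 0 < η) (hγ0 : 0 < γ) (hγ1 : γ ≤ 1)
    (w d y wplus : EuclideanSpace ℝ (Fin dim))
    (hy : ∀ z, (1 / (2 * η)) * ‖y - (w + η • d)‖ ^ 2 + φ y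
            ≤ (1 / (2 * η)) * ‖z - (w + η • d)‖ ^ 2 + φ z)
    (hwplus : wplus = (1 - γ) • w + γ • y) :
    f wplus + φ wplus
      ≤ f w + φ w + (γ / 2) * ‖gradf w + d‖ ^ 2
        + (γ / 2 - γ / η + L * γ ^ 2 / 2) * ‖y - w‖ ^ 2
        - (γ / 2) * ‖gradf w + d - (y - w)‖ ^ 2 := by
  have hA0 : 0 ≤ (1 / (2 * η)) * ‖w - (w + η • d)‖ ^ 2 + φ w
      - ((1 / (2 * η)) * ‖y - (w + η • d)‖ ^ 2 + φ y) := by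
    have := hy w; linarith
  -- strong prox inequality: for t ∈ (0,1)
  have hstrong : ∀ t : ℝ, 0 < t → t < 1 →
      (1 - t) * ((1 / (2 * η)) * ‖w - y‖ ^ 2)
        ≤ (1 / (2 * η)) * ‖w - (w + η • d)‖ ^ 2 + φ w
          - ((1 / (2 * η)) * ‖y - (w + η • d)‖ ^ 2 + φ y) := by
    intro t ht0 ht1
    have hz := hy ((1-t) • y + t • w)
    have hconv := hφ.2 (Set.mem_univ y) (Set.mem_univ w)
      (by linarith : (0:ℝ) ≤ 1 - t) ht0.le (by ring)
    simp only [smul_eq_mul] at hconv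
    have hnorm : ‖(1-t) • y + t • w - (w + η • d)‖ ^ 2
        = (1-t) * ‖y - (w + η • d)‖^2 + t * ‖w - (w + η • d)‖^2
          - t*(1-t)*‖w - y‖^2 := by
      have h1 : (1-t) • y + t • w - (w + η • d)
          = (1-t) • (y - (w + η • d)) + t • (w - (w + η • d)) := by
        simp [smul_sub]; module
      rw [h1, combo_sq', show y - (w + η • d) - (w - (w + η • d)) = y - w by abel,
        norm_sub_rev y w]
    rw [hnorm] at hz
    have key : t * ((1 - t) * ((1 / (2 * η)) * ‖w - y‖ ^ 2))
        ≤ t * ((1 / (2 * η)) * ‖w - (w + η • d)‖ ^ 2 + φ w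
          - ((1 / (2 * η)) * ‖y - (w + η • d)‖ ^ 2 + φ y)) := by
      nlinarith [hz, hconv]
    exact (mul_le_mul_iff_right₀ ht0).mp key
  -- conclude B ≤ A
  have hBA : (1 / (2 * η)) * ‖w - y‖ ^ 2
      ≤ (1 / (2 * η)) * ‖w - (w + η • d)‖ ^ 2 + φ w
        - ((1 / (2 * η)) * ‖y - (w + η • d)‖ ^ 2 + φ y) := by
    set A : ℝ := (1 / (2 * η)) * ‖w - (w + η • d)‖ ^ 2 + φ w
        - ((1 / (2 * η)) * ‖y - (w + η • d)‖ ^ 2 + φ y) with hAdef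
    set B : ℝ := (1 / (2 * η)) * ‖w - y‖ ^ 2 with hBdef
    have hB0 : 0 ≤ B := by rw [hBdef]; positivity
    clear_value A B
    by_contra h
    push_neg at h
    have hBpos : 0 < B := lt_of_le_of_lt hA0 h
    have ht := hstrong ((B - A) / (2 * B)) (div_pos (by linarith) (by linarith))
      (by rw [div_lt_one (by linarith)]; linarith)
    have heq : (1 - (B - A) / (2 * B)) * B = B - (B - A) / 2 := by
      field_simp
    rw [heq] at ht
    linarith
  -- expand to get: φ y - φ w ≤ ⟪d, y - w⟫ - (1/η) ‖y - w‖²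
  have hwc : ‖w - (w + η • d)‖ ^ 2 = η^2 * ‖d‖^2 := by
    have h1 : w - (w + η • d) = (-η) • d := by module
    rw [h1, norm_smul]
    simp only [Real.norm_eq_abs, abs_neg, abs_of_pos hη]; ring
  have hyc : ‖y - (w + η • d)‖ ^ 2
      = ‖y - w‖^2 - 2 * η * ⟪y - w, d⟫ + η^2 * ‖d‖^2 := by
    have h1 : y - (w + η • d) = (y - w) - η • d := by module
    rw [h1, @norm_sub_sq_real, real_inner_smul_right, norm_smul]
    simp only [Real.norm_eq_abs, abs_of_pos hη]; ring
  have h3 : φ y - φ w ≤ ⟪d, y - w⟫ - (1/η) * ‖y - w‖^2 := by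
    rw [hwc, hyc, norm_sub_rev w y] at hBA
    rw [real_inner_comm]
    have hη' : η ≠ 0 := ne_of_gt hη
    have e1 : (1 / (2 * η)) * (2 * η * ⟪y - w, d⟫) = ⟪y - w, d⟫ := by
      field_simp
    have e2 : (1 / (2 * η)) * (η^2 * ‖d‖^2) = (η/2) * ‖d‖^2 := by
      field_simp
    have e3 : (1/η) * ‖y - w‖^2 = 2 * ((1 / (2 * η)) * ‖y - w‖^2) := by
      field_simp
    nlinarith [hBA]
  -- smoothness at (w, wplus)
  have hdiff : wplus - w = γ • (y - w) := by rw [hwplus]; module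
  have hs := hsmooth w wplus
  rw [hdiff, real_inner_smul_right, norm_smul, Real.norm_eq_abs, abs_of_pos hγ0] at hs
  -- convexity of φ at wplus
  have hconv : φ wplus ≤ (1 - γ) * φ w + γ * φ y := by
    rw [hwplus]
    have := hφ.2 (Set.mem_univ w) (Set.mem_univ y) (by linarith : (0:ℝ) ≤ 1 - γ)
      hγ0.le (by ring)
    simpa using this
  -- inner identity, scaled by γ
  have hidγ : γ * (⟪gradf w, y - w⟫ + ⟪d, y - w⟫)
      = γ * ((‖gradf w + d‖^2 + ‖y - w‖^2 - ‖gradf w + d - (y - w)‖^2) / 2) := by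
    rw [← inner_add_left, inner_half']
  have h3γ := mul_le_mul_of_nonneg_left h3 hγ0.le
  have hbridge : γ / η * ‖y - w‖ ^ 2 = γ * (1 / η * ‖y - w‖ ^ 2) := by ring
  nlinarith [hs, hconv, h3γ, hidγ, hbridge]
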